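/- arXiv:1112.1809 — 4 statements merged into one kernel-verified Lean document; each statement's English description precedes it below -/
import Mathlib

section
/- Let D be an oriented knot diagram with n ≥ 1 crossings, modeled by a Gauss code g, and let D* be the mirror image of D. Then X_{D*}(t) = t^(n−1) · X_D(t⁻¹); that is, for every k with 0 ≤ k ≤ n−1, the coefficient of t^k in X_{D*}(t) equals the coefficient of t^(n−1−k) in X_D(t) (X_{D*} is the reflection of X_D at degree n−1). -/
open Polynomial Finset

/-- An oriented knot diagram with `n` crossings, modeled by its oriented Gauss code. -/
structure GaussCode (n : ℕ) where
  g : ZMod (2 * n) → Fin n × Bool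
  o : Fin n → ZMod (2 * n)
  u : Fin n → ZMod (2 * n)
  over_iff : ∀ (c : Fin n) (e : ZMod (2 * n)), g e = (c, true) ↔ e = o c
  under_iff : ∀ (c : Fin n) (e : ZMod (2 * n)), g e = (c, false) ↔ e = u c

namespace GaussCode

variable {n : ℕ}

/-- The warping degree of the base position `e`: the number of crossings whose
under-passage occurs strictly before its over-passage when traversing the diagram
starting at `e`. -/
def d (D : GaussCode n) (e : ZMod (2 * n)) : ℕ :=
  (Finset.univ.filter fun c : Fin n => (D.u c - e).val < (D.o c - e).val).card

/-- The warping crossing polynomial. -/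
noncomputable def Xpoly (D : GaussCode n) : Polynomial ℤ :=
  ∑ c : Fin n, Polynomial.X ^ D.d (D.o c)

/-- The warping polynomial. -/
noncomputable def Wpoly (D : GaussCode n) : Polynomial ℤ :=
  ∑ k ∈ Finset.range (2 * n), Polynomial.X ^ D.d (k : ZMod (2 * n))

/-- The warping degree of the diagram: minimum over all base positions. -/
noncomputable def wdeg (D : GaussCode n) : ℕ :=
  sInf (Set.range fun e : ZMod (2 * n) => D.d e)

/-- The diagram is alternating. -/
def Alternating (D : GaussCode n) : Prop :=
  ∀ e : ZMod (2 * n), (D.g e).2 ≠ (D.g (e + 1)).2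

end GaussCode

namespace XpolyMirrorAux

variable {n : ℕ}

lemma g_o (D : GaussCode n) (c : Fin n) : D.g (D.o c) = (c, true) :=
  (D.over_iff c (D.o c)).mpr rfl

lemma g_u (D : GaussCode n) (c : Fin n) : D.g (D.u c) = (c, false) :=
  (D.under_iff c (D.u c)).mpr rfl

lemma o_ne_u (D : GaussCode n) (c c' : Fin n) : D.o c ≠ D.u c' := by
  intro hh
  have := g_o D c
  rw [hh, g_u D c'] at this
  simp at this

section

variable (hn : 1 ≤ n)
include hn

lemma val_sub_one (y : ZMod (2 * n)) (hy : y ≠ 0) :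
    haveI : NeZero (2 * n) := ⟨by omega⟩
    (y - 1).val = y.val - 1 := by
  haveI : NeZero (2 * n) := ⟨by omega⟩
  haveI : Fact (1 < 2 * n) := ⟨by omega⟩
  have h1 : 1 ≤ y.val := Nat.one_le_iff_ne_zero.mpr
    (fun hh => hy ((ZMod.val_eq_zero y).mp hh))
  rw [ZMod.val_sub (by rw [ZMod.val_one]; exact h1), ZMod.val_one]

lemma val_neg_one :
    haveI : NeZero (2 * n) := ⟨by omega⟩
    (-1 : ZMod (2 * n)).val = 2 * n - 1 := by
  haveI : NeZero (2 * n) := ⟨by omega⟩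
  have h2 : 2 * n - 1 < 2 * n := by omega
  have h3 : (-1 : ZMod (2 * n)) = ((2 * n - 1 : ℕ) : ZMod (2 * n)) := by
    rw [Nat.cast_sub (by omega : 1 ≤ 2 * n)]
    simp
  rw [h3, ZMod.val_cast_of_lt h2]

lemma step_iff (D : GaussCode n) (e : ZMod (2 * n)) (c : Fin n)
    (hc : c ≠ (D.g e).1) :
    haveI : NeZero (2 * n) := ⟨by omega⟩
    ((D.u c - (e + 1)).val < (D.o c - (e + 1)).val ↔
      (D.u c - e).val < (D.o c - e).val) := by
  haveI : NeZero (2 * n) := ⟨by omega⟩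
  have hu : D.u c ≠ e := by
    intro hh
    apply hc
    have h3 := g_u D c
    rw [hh] at h3
    rw [h3]
  have ho : D.o c ≠ e := by
    intro hh
    apply hc
    have h3 := g_o D c
    rw [hh] at h3
    rw [h3]
  have hu0 : D.u c - e ≠ 0 := sub_ne_zero.mpr hu
  have ho0 : D.o c - e ≠ 0 := sub_ne_zero.mpr ho
  have e1 : D.u c - (e + 1) = (D.u c - e) - 1 := by ring
  have e2 : D.o c - (e + 1) = (D.o c - e) - 1 := by ring
  rw [e1, e2, val_sub_one hn _ hu0, val_sub_one hn _ ho0]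
  have h1 : 1 ≤ (D.u c - e).val := Nat.one_le_iff_ne_zero.mpr
    (fun hh => hu0 ((ZMod.val_eq_zero _).mp hh))
  have h2 : 1 ≤ (D.o c - e).val := Nat.one_le_iff_ne_zero.mpr
    (fun hh => ho0 ((ZMod.val_eq_zero _).mp hh))
  omega

lemma d_succ_over (D : GaussCode n) (e : ZMod (2 * n))
    (he : (D.g e).2 = true) : D.d (e + 1) = D.d e + 1 := by
  haveI : NeZero (2 * n) := ⟨by omega⟩
  have heo : e = D.o (D.g e).1 := (D.over_iff (D.g e).1 e).mp (by rw [← he])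
  set c0 := (D.g e).1 with hc0
  have hune : D.u c0 - e ≠ 0 := sub_ne_zero.mpr (fun hh => o_ne_u D c0 c0 (heo ▸ hh.symm))
  have hset : (Finset.univ.filter fun c : Fin n => (D.u c - (e+1)).val < (D.o c - (e+1)).val)
      = insert c0 (Finset.univ.filter fun c : Fin n => (D.u c - e).val < (D.o c - e).val) := by
    ext c
    simp only [Finset.mem_filter, Finset.mem_univ, true_and, Finset.mem_insert]
    by_cases hc : c = c0
    · refine iff_of_true ?_ (Or.inl hc)
      rw [hc]
      have e2 : D.o c0 - (e + 1) = -1 := by rw [← heo]; ring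
      have e1 : D.u c0 - (e + 1) = (D.u c0 - e) - 1 := by ring
      rw [e1, e2, val_sub_one hn _ hune, val_neg_one hn]
      have := ZMod.val_lt (D.u c0 - e)
      omega
    · rw [step_iff hn D e c hc]
      simp [hc]
  have hnotmem : c0 ∉ (Finset.univ.filter fun c : Fin n =>
      (D.u c - e).val < (D.o c - e).val) := by
    simp only [Finset.mem_filter, Finset.mem_univ, true_and, not_lt]
    rw [← heo]
    simp
  rw [GaussCode.d, GaussCode.d, hset, Finset.card_insert_of_notMem hnotmem]

lemma d_succ_under (D : GaussCode n) (e : ZMod (2 * n))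
    (he : (D.g e).2 = false) : D.d e = D.d (e + 1) + 1 := by
  haveI : NeZero (2 * n) := ⟨by omega⟩
  have heu : e = D.u (D.g e).1 := (D.under_iff (D.g e).1 e).mp (by rw [← he])
  set c0 := (D.g e).1 with hc0
  have hone : D.o c0 - e ≠ 0 := sub_ne_zero.mpr (fun hh => o_ne_u D c0 c0 (heu ▸ hh))
  have hoval : 1 ≤ (D.o c0 - e).val := Nat.one_le_iff_ne_zero.mpr
    (fun hh => hone ((ZMod.val_eq_zero _).mp hh))
  have hset : (Finset.univ.filter fun c : Fin n => (D.u c - e).val < (D.o c - e).val)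
      = insert c0 (Finset.univ.filter fun c : Fin n =>
          (D.u c - (e+1)).val < (D.o c - (e+1)).val) := by
    ext c
    simp only [Finset.mem_filter, Finset.mem_univ, true_and, Finset.mem_insert]
    by_cases hc : c = c0
    · refine iff_of_true ?_ (Or.inl hc)
      rw [hc, ← heu]
      simpa using hone
    · rw [step_iff hn D e c hc]
      simp [hc]
  have hnotmem : c0 ∉ (Finset.univ.filter fun c : Fin n =>
      (D.u c - (e+1)).val < (D.o c - (e+1)).val) := by
    simp only [Finset.mem_filter, Finset.mem_univ, true_and, not_lt]
    have e1 : D.u c0 - (e + 1) = -1 := by rw [← heu]; ring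
    have e2 : D.o c0 - (e + 1) = (D.o c0 - e) - 1 := by ring
    rw [e1, e2, val_sub_one hn _ hone, val_neg_one hn]
    have := ZMod.val_lt (D.o c0 - e)
    omega
  rw [GaussCode.d, GaussCode.d, hset, Finset.card_insert_of_notMem hnotmem]

lemma crossing (D : GaussCode n) (m : ℕ) :
    haveI : NeZero (2 * n) := ⟨by omega⟩
    (Finset.univ.filter fun e : ZMod (2 * n) => (D.g e).2 = true ∧ D.d e = m).card
      = (Finset.univ.filter fun e : ZMod (2 * n) => (D.g e).2 = false ∧ D.d e = m + 1).card := by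
  haveI : NeZero (2 * n) := ⟨by omega⟩
  set F : ZMod (2 * n) → ℤ := fun e => if D.d e ≤ m then 1 else 0 with hF
  have hshift : ∑ e : ZMod (2 * n), F (e + 1) = ∑ e : ZMod (2 * n), F e :=
    Fintype.sum_bijective (· + (1 : ZMod (2 * n)))
      (Equiv.addRight (1 : ZMod (2 * n))).bijective _ _ (fun x => rfl)
  have hsum : ∑ e : ZMod (2 * n), (F (e + 1) - F e) = 0 := by
    rw [Finset.sum_sub_distrib, hshift, sub_self]
  have hpt : ∀ e : ZMod (2 * n), F (e + 1) - F e =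
      (if (D.g e).2 = false ∧ D.d e = m + 1 then (1 : ℤ) else 0)
        - (if (D.g e).2 = true ∧ D.d e = m then (1 : ℤ) else 0) := by
    intro e
    rcases Bool.eq_false_or_eq_true (D.g e).2 with hb | hb
    · have hd := d_succ_over hn D e hb
      have h1 : (if (D.g e).2 = false ∧ D.d e = m + 1 then (1:ℤ) else 0) = 0 := by simp [hb]
      have h2 : (if (D.g e).2 = true ∧ D.d e = m then (1:ℤ) else 0)
          = (if D.d e = m then (1:ℤ) else 0) := by simp [hb]
      rw [h1, h2]
      simp only [hF]
      split_ifs <;> omega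
    · have hd := d_succ_under hn D e hb
      have h1 : (if (D.g e).2 = false ∧ D.d e = m + 1 then (1:ℤ) else 0)
          = (if D.d e = m + 1 then (1:ℤ) else 0) := by simp [hb]
      have h2 : (if (D.g e).2 = true ∧ D.d e = m then (1:ℤ) else 0) = 0 := by simp [hb]
      rw [h1, h2]
      simp only [hF]
      split_ifs <;> omega
  rw [Finset.sum_congr rfl (fun e _ => hpt e), Finset.sum_sub_distrib,
    Finset.sum_boole, Finset.sum_boole] at hsum
  have := sub_eq_zero.mp hsum
  exact_mod_cast this.symm

end

end XpolyMirrorAux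

open XpolyMirrorAux

/-- The warping crossing polynomial of the mirror image `D*` is the reflection of that
of `D` at degree `n − 1`: `X_{D*}(t) = t^(n−1) X_D(t⁻¹)`. -/
theorem Xpoly_mirror
    (n : ℕ) (hn : 1 ≤ n) (D Dm : GaussCode n)
    (h : ∀ e : ZMod (2 * n), Dm.g e = ((D.g e).1, !(D.g e).2)) :
    ∀ k : ℕ, k ≤ n - 1 → Dm.Xpoly.coeff k = D.Xpoly.coeff (n - 1 - k) := by
  intro k hk
  haveI : NeZero (2 * n) := ⟨by omega⟩
  have hmo : ∀ c, Dm.o c = D.u c := by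
    intro c
    have hg : Dm.g (D.u c) = (c, true) := by rw [h, g_u D c]; rfl
    exact ((Dm.over_iff c (D.u c)).mp hg).symm
  have hmu : ∀ c, Dm.u c = D.o c := by
    intro c
    have hg : Dm.g (D.o c) = (c, false) := by rw [h, g_o D c]; rfl
    exact ((Dm.under_iff c (D.o c)).mp hg).symm
  have hd_le : ∀ e, D.d e ≤ n := by
    intro e
    calc D.d e ≤ (Finset.univ : Finset (Fin n)).card := Finset.card_filter_le _ _
    _ = n := by simp
  have hcompl : ∀ e, D.d e + Dm.d e = n := by
    intro e
    have hsplit := Finset.card_filter_add_card_filter_not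
      (s := (Finset.univ : Finset (Fin n)))
      (p := fun c : Fin n => (D.u c - e).val < (D.o c - e).val)
    simp only [not_lt, Finset.card_univ, Fintype.card_fin] at hsplit
    have h4 : (Finset.univ.filter fun c : Fin n => (Dm.u c - e).val < (Dm.o c - e).val)
        = (Finset.univ.filter fun a : Fin n => (D.o a - e).val ≤ (D.u a - e).val) := by
      apply Finset.filter_congr
      intro c _
      rw [hmo, hmu]
      constructor
      · intro hlt
        exact le_of_lt hlt
      · intro hle
        rcases lt_or_eq_of_le hle with hlt | heq
        · exact hlt
        · exfalso
          have h3 : D.o c - e = D.u c - e := ZMod.val_injective _ heq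
          exact o_ne_u D c c (sub_left_injective h3)
    rw [GaussCode.d, GaussCode.d, h4]
    exact hsplit
  have hcoeff : ∀ (E : GaussCode n) (j : ℕ),
      E.Xpoly.coeff j = ((Finset.univ.filter fun c : Fin n => E.d (E.o c) = j).card : ℤ) := by
    intro E j
    rw [GaussCode.Xpoly, Polynomial.finset_sum_coeff]
    simp only [Polynomial.coeff_X_pow]
    rw [Finset.sum_boole]
    have h5 : (Finset.univ.filter fun x : Fin n => j = E.d (E.o x))
        = (Finset.univ.filter fun c : Fin n => E.d (E.o c) = j) := by
      ext c
      simp [eq_comm]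
    rw [h5]
  rw [hcoeff Dm k, hcoeff D (n - 1 - k)]
  congr 1
  have hL : (Finset.univ.filter fun c : Fin n => Dm.d (Dm.o c) = k)
      = Finset.univ.filter fun c : Fin n => D.d (D.u c) = n - k := by
    apply Finset.filter_congr
    intro c _
    rw [hmo]
    have h1 := hcompl (D.u c)
    have h2 := hd_le (D.u c)
    omega
  rw [hL]
  have hbij_u : (Finset.univ.filter fun c : Fin n => D.d (D.u c) = n - k).card
      = (Finset.univ.filter fun e : ZMod (2 * n) =>
          (D.g e).2 = false ∧ D.d e = n - k).card := by
    apply Finset.card_bij (fun c _ => D.u c)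
    · intro c hc
      simp only [Finset.mem_filter, Finset.mem_univ, true_and] at hc ⊢
      exact ⟨by rw [g_u], hc⟩
    · intro c1 h1 c2 h2 hh
      have h3 := g_u D c1
      rw [hh, g_u D c2] at h3
      simpa using h3.symm
    · intro e he
      simp only [Finset.mem_filter, Finset.mem_univ, true_and] at he
      obtain ⟨hb, hd⟩ := he
      have heu : e = D.u (D.g e).1 := (D.under_iff (D.g e).1 e).mp (by rw [← hb])
      refine ⟨(D.g e).1, ?_, heu.symm⟩
      simp only [Finset.mem_filter, Finset.mem_univ, true_and]
      rw [← heu]; exact hd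
  have hbij_o : (Finset.univ.filter fun c : Fin n => D.d (D.o c) = n - 1 - k).card
      = (Finset.univ.filter fun e : ZMod (2 * n) =>
          (D.g e).2 = true ∧ D.d e = n - 1 - k).card := by
    apply Finset.card_bij (fun c _ => D.o c)
    · intro c hc
      simp only [Finset.mem_filter, Finset.mem_univ, true_and] at hc ⊢
      exact ⟨by rw [g_o], hc⟩
    · intro c1 h1 c2 h2 hh
      have h3 := g_o D c1
      rw [hh, g_o D c2] at h3
      simpa using h3.symm
    · intro e he
      simp only [Finset.mem_filter, Finset.mem_univ, true_and] at he
      obtain ⟨hb, hd⟩ := he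
      have heo : e = D.o (D.g e).1 := (D.over_iff (D.g e).1 e).mp (by rw [← hb])
      refine ⟨(D.g e).1, ?_, heo.symm⟩
      simp only [Finset.mem_filter, Finset.mem_univ, true_and]
      rw [← heo]; exact hd
  rw [hbij_u, hbij_o]
  have hm : n - 1 - k + 1 = n - k := by omega
  rw [crossing hn D (n - 1 - k), hm]
end

section
/- Let D be an oriented knot diagram with n ≥ 1 crossings, modeled by a Gauss code g. Then D is an alternating diagram if and only if X_D(t) = n · t^d for some natural number d. -/
open Polynomial Finset

-- arithmetic helpers
lemma val_pred {N : ℕ} [NeZero N] (y : ZMod N) (hy : y ≠ 0) : (y - 1).val + 1 = y.val := by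
  have h0 : y.val ≠ 0 := fun h => hy ((ZMod.val_eq_zero y).1 h)
  have h1 : y.val < N := ZMod.val_lt y
  have h2 : y - 1 = ((y.val - 1 : ℕ) : ZMod N) := by
    have hy' : ((y.val : ℕ) : ZMod N) = y := by simp [ZMod.natCast_val, ZMod.cast_id]
    rw [Nat.cast_sub (by omega), hy', Nat.cast_one]
  rw [h2, ZMod.val_cast_of_lt (by omega)]
  omega

lemma sub_succ_val {N : ℕ} [NeZero N] {x e : ZMod N} (h : x ≠ e) :
    (x - (e + 1)).val + 1 = (x - e).val := by
  have h0 : x - e ≠ 0 := sub_ne_zero.mpr h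
  have h1 : x - (e + 1) = (x - e) - 1 := by ring
  rw [h1]; exact val_pred _ h0

lemma val_neg_one' {N : ℕ} [NeZero N] : (-1 : ZMod N).val = N - 1 := by
  have hN : N ≠ 0 := NeZero.ne N
  have h : (-1 : ZMod N) = ((N - 1 : ℕ) : ZMod N) := by
    rw [Nat.cast_sub (by omega), ZMod.natCast_self, Nat.cast_one]; ring
  rw [h, ZMod.val_cast_of_lt (by omega)]

lemma add_val_sub {N : ℕ} [NeZero N] (e x : ZMod N) :
    e + (((x - e).val : ℕ) : ZMod N) = x := by
  simp [ZMod.natCast_val, ZMod.cast_id]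

lemma sub_val_sub {N : ℕ} [NeZero N] (e x : ZMod N) :
    e - (((e - x).val : ℕ) : ZMod N) = x := by
  simp [ZMod.natCast_val, ZMod.cast_id]

namespace GaussCode
variable {n : ℕ}

lemma g_o (D : GaussCode n) (c : Fin n) : D.g (D.o c) = (c, true) := (D.over_iff c _).2 rfl
lemma g_u (D : GaussCode n) (c : Fin n) : D.g (D.u c) = (c, false) := (D.under_iff c _).2 rfl

lemma eq_o_of_over (D : GaussCode n) {e : ZMod (2 * n)} (h : (D.g e).2 = true) :
    e = D.o (D.g e).1 := by
  have h2 : D.g e = ((D.g e).1, true) := by rw [← h]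
  exact (D.over_iff _ _).1 h2

lemma eq_u_of_under (D : GaussCode n) {e : ZMod (2 * n)} (h : (D.g e).2 = false) :
    e = D.u (D.g e).1 := by
  have h2 : D.g e = ((D.g e).1, false) := by rw [← h]
  exact (D.under_iff _ _).1 h2

lemma u_ne_of_over (D : GaussCode n) {e : ZMod (2 * n)} (h : (D.g e).2 = true) (c : Fin n) :
    D.u c ≠ e := by
  intro hc
  have := D.g_u c
  rw [hc] at this
  rw [this] at h
  simp at h

lemma o_ne_of_under (D : GaussCode n) {e : ZMod (2 * n)} (h : (D.g e).2 = false) (c : Fin n) :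
    D.o c ≠ e := by
  intro hc
  have := D.g_o c
  rw [hc] at this
  rw [this] at h
  simp at h

end GaussCode

namespace GaussCode
variable {n : ℕ}

lemma d_step_over (D : GaussCode n) (hn : 1 ≤ n) {e : ZMod (2 * n)}
    (h : (D.g e).2 = true) : D.d (e + 1) = D.d e + 1 := by
  haveI : NeZero (2 * n) := ⟨by omega⟩
  set c₀ := (D.g e).1 with hc₀
  have he : e = D.o c₀ := D.eq_o_of_over h
  have key : (Finset.univ.filter fun c : Fin n =>
        (D.u c - (e + 1)).val < (D.o c - (e + 1)).val)
      = insert c₀ (Finset.univ.filter fun c : Fin n =>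
        (D.u c - e).val < (D.o c - e).val) := by
    ext c
    simp only [Finset.mem_insert, Finset.mem_filter, Finset.mem_univ, true_and]
    have h2 := sub_succ_val (D.u_ne_of_over h c)
    by_cases hc : c = c₀
    · subst hc
      have h1 : D.o c₀ - (e + 1) = -1 := by rw [← he]; ring
      have h3 : (D.u c₀ - e).val < 2 * n := ZMod.val_lt _
      rw [h1, val_neg_one']
      constructor
      · intro _; left; rfl
      · intro _; omega
    · have ho : D.o c ≠ e := by
        intro hc'
        apply hc
        have hg : D.g e = (c, true) := (D.over_iff c e).2 hc'.symm
        rw [hc₀, hg]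
      have h3 := sub_succ_val ho
      simp only [hc, false_or]
      omega
  have hnm : c₀ ∉ (Finset.univ.filter fun c : Fin n =>
      (D.u c - e).val < (D.o c - e).val) := by
    simp only [Finset.mem_filter, Finset.mem_univ, true_and, not_lt]
    rw [← he]
    simp
  rw [GaussCode.d, GaussCode.d, key, Finset.card_insert_of_notMem hnm]

lemma d_step_under (D : GaussCode n) (hn : 1 ≤ n) {e : ZMod (2 * n)}
    (h : (D.g e).2 = false) : D.d e = D.d (e + 1) + 1 := by
  haveI : NeZero (2 * n) := ⟨by omega⟩
  set c₀ := (D.g e).1 with hc₀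
  have he : e = D.u c₀ := D.eq_u_of_under h
  have key : (Finset.univ.filter fun c : Fin n =>
        (D.u c - e).val < (D.o c - e).val)
      = insert c₀ (Finset.univ.filter fun c : Fin n =>
        (D.u c - (e + 1)).val < (D.o c - (e + 1)).val) := by
    ext c
    simp only [Finset.mem_insert, Finset.mem_filter, Finset.mem_univ, true_and]
    have h3 := sub_succ_val (D.o_ne_of_under h c)
    by_cases hc : c = c₀
    · subst hc
      have h1 : D.u c₀ - e = 0 := by rw [← he]; ring
      have h4 : D.o c₀ - e ≠ 0 := sub_ne_zero.mpr (D.o_ne_of_under h c₀)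
      have h5 : (D.o c₀ - e).val ≠ 0 := fun hz => h4 ((ZMod.val_eq_zero _).1 hz)
      rw [h1]
      constructor
      · intro _; left; rfl
      · intro _
        simp only [ZMod.val_zero]
        omega
    · have hu : D.u c ≠ e := by
        intro hc'
        apply hc
        have hg : D.g e = (c, false) := (D.under_iff c e).2 hc'.symm
        rw [hc₀, hg]
      have h2 := sub_succ_val hu
      simp only [hc, false_or]
      omega
  have hnm : c₀ ∉ (Finset.univ.filter fun c : Fin n =>
      (D.u c - (e + 1)).val < (D.o c - (e + 1)).val) := by
    simp only [Finset.mem_filter, Finset.mem_univ, true_and, not_lt]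
    have h1 : D.u c₀ - (e + 1) = -1 := by rw [← he]; ring
    have h3 := sub_succ_val (D.o_ne_of_under h c₀)
    have h4 : (D.o c₀ - e).val < 2 * n := ZMod.val_lt _
    rw [h1, val_neg_one']
    omega
  rw [GaussCode.d, GaussCode.d, key, Finset.card_insert_of_notMem hnm]

lemma d_run (D : GaussCode n) (hn : 1 ≤ n) (f : ZMod (2 * n)) :
    ∀ j : ℕ, (∀ i, i < j → (D.g (f + (i : ℕ))).2 = false) →
      D.d f = D.d (f + (j : ℕ)) + j := by
  intro j
  induction j with
  | zero => intro _; simp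
  | succ j ih =>
    intro h
    have h1 := ih (fun i hi => h i (by omega))
    have h2 : (D.g (f + (j : ℕ))).2 = false := h j (by omega)
    have h3 := D.d_step_under hn h2
    have h5 : f + ((j : ℕ) : ZMod (2 * n)) + 1 = f + (((j + 1 : ℕ)) : ZMod (2 * n)) := by
      push_cast; ring
    rw [h5] at h3
    omega

end GaussCode

namespace GaussCode
variable {n : ℕ}

/-- In an alternating diagram, stepping by 2 from an over position lands on an
over position with the same warping degree. -/
lemma over_step2 (D : GaussCode n) (hn : 1 ≤ n) (hA : D.Alternating)
    {e : ZMod (2 * n)} (h : (D.g e).2 = true) :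
    (D.g (e + 1 + 1)).2 = true ∧ D.d (e + 1 + 1) = D.d e := by
  have h1 : (D.g (e + 1)).2 = false := by
    have := hA e
    rw [h] at this
    exact Bool.not_eq_true _ ▸ (by simpa using this.symm)
  have h2 : (D.g (e + 1 + 1)).2 = true := by
    have := hA (e + 1)
    rw [h1] at this
    simpa using this.symm
  have h3 := D.d_step_over hn h
  have h4 := D.d_step_under hn h1
  exact ⟨h2, by omega⟩

lemma over_iter2 (D : GaussCode n) (hn : 1 ≤ n) (hA : D.Alternating)
    {e : ZMod (2 * n)} (h : (D.g e).2 = true) :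
    ∀ k : ℕ, (D.g (e + ((2 * k : ℕ) : ZMod (2 * n)))).2 = true ∧
      D.d (e + ((2 * k : ℕ) : ZMod (2 * n))) = D.d e := by
  intro k
  induction k with
  | zero =>
    constructor
    · simpa using h
    · norm_num
  | succ k ih =>
    have hc : e + ((2 * (k + 1) : ℕ) : ZMod (2 * n))
        = e + ((2 * k : ℕ) : ZMod (2 * n)) + 1 + 1 := by push_cast; ring
    have := D.over_step2 hn hA ih.1
    rw [hc]
    exact ⟨this.1, by rw [this.2, ih.2]⟩

lemma d_o_const_of_alt (D : GaussCode n) (hn : 1 ≤ n) (hA : D.Alternating)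
    (c c' : Fin n) : D.d (D.o c) = D.d (D.o c') := by
  haveI : NeZero (2 * n) := ⟨by omega⟩
  set j := (D.o c' - D.o c).val with hj
  have hend : D.o c + ((j : ℕ) : ZMod (2 * n)) = D.o c' := add_val_sub _ _
  have hover : (D.g (D.o c)).2 = true := by rw [D.g_o]
  rcases Nat.even_or_odd j with ⟨k, hk⟩ | ⟨k, hk⟩
  · have h2k : j = 2 * k := by omega
    have := (D.over_iter2 hn hA hover k).2
    rw [← h2k, hend] at this
    exact this.symm
  · exfalso
    have h2k : j = 2 * k + 1 := by omega
    have hcur := (D.over_iter2 hn hA hover k).1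
    have h1 : (D.g (D.o c + ((2 * k : ℕ) : ZMod (2 * n)) + 1)).2 = false := by
      have := hA (D.o c + ((2 * k : ℕ) : ZMod (2 * n)))
      rw [hcur] at this
      exact Bool.not_eq_true _ ▸ (by simpa using this.symm)
    have he : D.o c + ((2 * k : ℕ) : ZMod (2 * n)) + 1
        = D.o c + ((j : ℕ) : ZMod (2 * n)) := by
      rw [h2k]; push_cast; ring
    rw [he, hend] at h1
    rw [D.g_o] at h1
    simp at h1

end GaussCode

namespace GaussCode
variable {n : ℕ}

lemma alt_of_const (D : GaussCode n) (hn : 1 ≤ n)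
    (H : ∀ c : Fin n, D.d (D.o c) = D.d (D.o ⟨0, hn⟩)) : D.Alternating := by
  haveI : NeZero (2 * n) := ⟨by omega⟩
  set c₀ : Fin n := ⟨0, hn⟩ with hc0
  set d0 := D.d (D.o c₀) with hd0
  have hover : ∀ e : ZMod (2 * n), (D.g e).2 = true → D.d e = d0 := by
    intro e h
    rw [D.eq_o_of_over h]
    exact H _
  intro e hcontra
  cases hb : (D.g e).2 with
  | true =>
    have h1 : (D.g (e + 1)).2 = true := by rw [← hcontra, hb]
    have hs := D.d_step_over hn hb
    have e1 := hover e hb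
    have e2 := hover (e + 1) h1
    omega
  | false =>
    have h1 : (D.g (e + 1)).2 = false := by rw [← hcontra, hb]
    -- there is an over position ahead
    have hex : ∃ j, 1 ≤ j ∧ (D.g (e + (j : ℕ))).2 = true := by
      refine ⟨(D.o c₀ - e).val, ?_, ?_⟩
      · rcases Nat.eq_zero_or_pos (D.o c₀ - e).val with h0 | h0
        · exfalso
          have : D.o c₀ - e = 0 := (ZMod.val_eq_zero _).1 h0
          have heq : D.o c₀ = e := by
            have := sub_eq_zero.mp this; exact this
          exact D.o_ne_of_under hb c₀ heq
        · omega
      · rw [add_val_sub, D.g_o]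
    set k := Nat.find hex with hkdef
    have hk := Nat.find_spec hex
    have hunder : ∀ i, i < k → (D.g (e + (i : ℕ))).2 = false := by
      intro i hi
      rcases Nat.eq_zero_or_pos i with h0 | h0
      · subst h0; simpa using hb
      · have hmin := Nat.find_min hex hi
        simp only [not_and] at hmin
        have := hmin h0
        simpa using this
    have hrun := D.d_run hn e k hunder
    have hk2 : 2 ≤ k := by
      rcases (by omega : k = 1 ∨ 2 ≤ k ∨ k = 0) with h | h | h
      · exfalso
        have h2 := hk.2
        rw [← hkdef] at h2
        rw [h] at h2
        rw [Nat.cast_one] at h2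
        rw [h1] at h2
        exact Bool.noConfusion h2
      · exact h
      · exfalso; have := hk.1; omega
    have hdek : D.d (e + (k : ℕ)) = d0 := hover _ hk.2
    -- there is an over position behind
    have hex' : ∃ m, 1 ≤ m ∧ (D.g (e - (m : ℕ))).2 = true := by
      refine ⟨(e - D.o c₀).val, ?_, ?_⟩
      · rcases Nat.eq_zero_or_pos (e - D.o c₀).val with h0 | h0
        · exfalso
          have : e - D.o c₀ = 0 := (ZMod.val_eq_zero _).1 h0
          have heq : D.o c₀ = e := (sub_eq_zero.mp this).symm
          exact D.o_ne_of_under hb c₀ heq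
        · omega
      · rw [sub_val_sub, D.g_o]
    set m := Nat.find hex' with hmdef
    have hm := Nat.find_spec hex'
    have hm1 : 1 ≤ m := hm.1
    have hunder' : ∀ i, 1 ≤ i → i < m → (D.g (e - (i : ℕ))).2 = false := by
      intro i h0 hi
      have hmin := Nat.find_min hex' hi
      simp only [not_and] at hmin
      have := hmin h0
      simpa using this
    have hstep := D.d_step_over hn hm.2
    rw [← hmdef] at hstep
    have hdm : D.d (e - (m : ℕ)) = d0 := hover _ hm.2
    have hund2 : ∀ i, i < m - 1 → (D.g (e - (m : ℕ) + 1 + (i : ℕ))).2 = false := by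
      intro i hi
      have harith : e - (m : ℕ) + 1 + (i : ℕ) = e - ((m - 1 - i : ℕ) : ZMod (2 * n)) := by
        have hj : (m - 1 - i) + (1 + i) = m := by omega
        have hcast : ((m : ℕ) : ZMod (2 * n))
            = ((m - 1 - i : ℕ) : ZMod (2 * n)) + ((1 + i : ℕ) : ZMod (2 * n)) := by
          rw [← Nat.cast_add, hj]
        rw [hcast]
        push_cast
        ring
      rw [harith]
      exact hunder' _ (by omega) (by omega)
    have hrun2 := D.d_run hn (e - (m : ℕ) + 1) (m - 1) hund2
    have hend : e - (m : ℕ) + 1 + ((m - 1 : ℕ) : ZMod (2 * n)) = e := by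
      have hcast : ((m : ℕ) : ZMod (2 * n))
          = ((m - 1 : ℕ) : ZMod (2 * n)) + 1 := by
        rw [show (1 : ZMod (2*n)) = ((1:ℕ) : ZMod (2*n)) by norm_num, ← Nat.cast_add,
          Nat.sub_add_cancel hm1]
      rw [hcast]
      ring
    rw [hend] at hrun2
    omega

end GaussCode


/-- A knot diagram with `n ≥ 1` crossings is alternating iff `X_D(t) = n t^d` for some `d`. -/
theorem alternating_iff_Xpoly (n : ℕ) (hn : 1 ≤ n) (D : GaussCode n) :
    D.Alternating ↔ ∃ d : ℕ, D.Xpoly = (n : Polynomial ℤ) * Polynomial.X ^ d := by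
  constructor
  · intro hA
    refine ⟨D.d (D.o ⟨0, hn⟩), ?_⟩
    rw [GaussCode.Xpoly]
    rw [Finset.sum_congr rfl
      (fun c _ => by rw [D.d_o_const_of_alt hn hA c ⟨0, hn⟩])]
    rw [Finset.sum_const, Finset.card_univ, Fintype.card_fin, nsmul_eq_mul]
  · rintro ⟨d, hd⟩
    have hall : ∀ c : Fin n, D.d (D.o c) = d := by
      have hcoeff := congrArg (fun p => Polynomial.coeff p d) hd
      simp only [GaussCode.Xpoly, Polynomial.finset_sum_coeff,
        Polynomial.coeff_X_pow] at hcoeff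
      have hrhs : ((n : Polynomial ℤ) * Polynomial.X ^ d).coeff d = (n : ℤ) := by
        rw [← Polynomial.C_eq_natCast, Polynomial.coeff_C_mul, Polynomial.coeff_X_pow]
        simp
      rw [hrhs] at hcoeff
      rw [Finset.sum_boole] at hcoeff
      have hcard : (Finset.univ.filter fun c : Fin n => d = D.d (D.o c)).card = n := by
        exact_mod_cast hcoeff
      have hsub : (Finset.univ.filter fun c : Fin n => d = D.d (D.o c)) = Finset.univ := by
        apply Finset.eq_univ_of_card
        rw [hcard, Fintype.card_fin]
      intro c
      have := Finset.mem_filter.1 (hsub ▸ Finset.mem_univ c)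
      exact this.2.symm
    exact D.alt_of_const hn (fun c => by rw [hall c, hall ⟨0, hn⟩])
end

section
/- Let D be an oriented knot diagram with n ≥ 1 crossings, modeled by a Gauss code g. Then d(D) + d(−D) + 1 ≤ n, where d(D) and d(−D) are the warping degrees of D and of the orientation-reversed diagram −D. -/
open Polynomial Finset

section AuxZMod
variable {m : ℕ} [NeZero m]

lemma aux_neg_one_sub_val (a : ZMod m) : (-1 - a).val = m - 1 - a.val := by
  have hm : 1 ≤ m := Nat.one_le_iff_ne_zero.2 (NeZero.ne m)
  have ha : a.val < m := ZMod.val_lt a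
  have h1 : (-1 - a : ZMod m) = ((m - 1 - a.val : ℕ) : ZMod m) := by
    have : ((m - 1 - a.val : ℕ) : ZMod m) = ((m : ℕ) : ZMod m) - 1 - (a.val : ℕ) := by
      push_cast [Nat.cast_sub (by omega : a.val ≤ m - 1), Nat.cast_sub hm]
      ring
    rw [this, ZMod.natCast_self, ZMod.natCast_rightInverse a]
    ring
  rw [h1, ZMod.val_cast_of_lt (by omega)]

lemma aux_sub_one_val (a : ZMod m) (ha : a ≠ 0) : (a - 1).val = a.val - 1 := by
  have hav : 0 < a.val := by
    rcases Nat.eq_zero_or_pos a.val with h | h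
    · exact absurd ((ZMod.val_eq_zero a).1 h) ha
    · exact h
  have h1 : (a - 1 : ZMod m) = ((a.val - 1 : ℕ) : ZMod m) := by
    rw [Nat.cast_sub hav, ZMod.natCast_rightInverse a, Nat.cast_one]
  rw [h1, ZMod.val_cast_of_lt (by have := ZMod.val_lt a; omega)]

end AuxZMod

/-- **Theorem (Shimizu).** For a knot diagram `D` with `n ≥ 1` crossings,
`d(D) + d(−D) + 1 ≤ n`. -/
theorem wdeg_add_wdeg_reverse_add_one_le
    (n : ℕ) (hn : 1 ≤ n) (D Dm : GaussCode n)
    (h : ∀ e : ZMod (2 * n), Dm.g e = D.g (-e)) :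
    D.wdeg + Dm.wdeg + 1 ≤ n := by
  haveI : NeZero (2 * n) := ⟨by omega⟩
  have hgu : ∀ c, D.g (D.u c) = (c, false) := fun c => (D.under_iff c _).2 rfl
  have hgo : ∀ c, D.g (D.o c) = (c, true) := fun c => (D.over_iff c _).2 rfl
  -- over and under positions are distinct
  have hou : ∀ c c', D.o c ≠ D.u c' := by
    intro c c' hcc
    have h1 := hgo c
    rw [hcc, hgu c'] at h1
    simpa using h1
  -- u is injective
  have huinj : ∀ c c', D.u c = D.u c' → c = c' := by
    intro c c' hcc
    have h1 := hgu c
    rw [hcc, hgu c'] at h1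
    simpa using h1.symm
  -- positions of Dm
  have hDmu : ∀ c, Dm.u c = -D.u c := by
    intro c
    have : Dm.g (-D.u c) = (c, false) := by rw [h, neg_neg]; exact hgu c
    exact ((Dm.under_iff c _).1 this).symm
  have hDmo : ∀ c, Dm.o c = -D.o c := by
    intro c
    have : Dm.g (-D.o c) = (c, true) := by rw [h, neg_neg]; exact hgo c
    exact ((Dm.over_iff c _).1 this).symm
  -- complement identity: D.d e + Dm.d (1 - e) = n
  have key : ∀ e : ZMod (2 * n), D.d e + Dm.d (1 - e) = n := by
    intro e
    have hcompl : Dm.d (1 - e)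
        = (Finset.univ.filter fun c : Fin n =>
            ¬ (D.u c - e).val < (D.o c - e).val).card := by
      unfold GaussCode.d
      congr 1
      apply Finset.filter_congr
      intro c _
      rw [hDmu, hDmo]
      have e1 : (-D.u c - (1 - e) : ZMod (2 * n)) = -1 - (D.u c - e) := by ring
      have e2 : (-D.o c - (1 - e) : ZMod (2 * n)) = -1 - (D.o c - e) := by ring
      rw [e1, e2, aux_neg_one_sub_val, aux_neg_one_sub_val]
      have hne : (D.u c - e : ZMod (2 * n)) ≠ D.o c - e := by
        intro hx
        exact hou c c (sub_left_injective hx).symm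
      have hval : (D.u c - e).val ≠ (D.o c - e).val := fun hv => hne (ZMod.val_injective _ hv)
      have h1 := ZMod.val_lt (D.u c - e)
      have h2 := ZMod.val_lt (D.o c - e)
      omega
    rw [hcompl]
    unfold GaussCode.d
    rw [Finset.card_filter_add_card_filter_not]
    simp
  -- step identity: D.d (D.u c₀) = D.d (D.u c₀ + 1) + 1
  have step : ∀ c₀ : Fin n, D.d (D.u c₀) = D.d (D.u c₀ + 1) + 1 := by
    intro c₀
    set e := D.u c₀ with he
    have hset : (Finset.univ.filter fun c : Fin n => (D.u c - e).val < (D.o c - e).val)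
        = insert c₀ (Finset.univ.filter fun c : Fin n =>
            (D.u c - (e + 1)).val < (D.o c - (e + 1)).val) := by
      ext c
      simp only [Finset.mem_filter, Finset.mem_univ, true_and, Finset.mem_insert]
      by_cases hc : c = c₀
      · subst hc
        simp only [true_or, iff_true]
        rw [← he, sub_self, ZMod.val_zero]
        have : (D.o c - e : ZMod (2 * n)) ≠ 0 := by
          intro hx
          exact hou c c ((sub_eq_zero.1 hx).trans he)
        have := (ZMod.val_eq_zero (D.o c - e)).not.2 this
        omega
      · have hu0 : (D.u c - e : ZMod (2 * n)) ≠ 0 := by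
          intro hx
          exact hc (huinj c c₀ (sub_eq_zero.1 hx))
        have ho0 : (D.o c - e : ZMod (2 * n)) ≠ 0 := by
          intro hx
          exact hou c c₀ (sub_eq_zero.1 hx)
        have eu : (D.u c - (e + 1) : ZMod (2 * n)) = (D.u c - e) - 1 := by ring
        have eo : (D.o c - (e + 1) : ZMod (2 * n)) = (D.o c - e) - 1 := by ring
        rw [eu, eo, aux_sub_one_val _ hu0, aux_sub_one_val _ ho0]
        have hupos : 0 < (D.u c - e).val := by
          have := (ZMod.val_eq_zero (D.u c - e)).not.2 hu0; omega
        have hopos : 0 < (D.o c - e).val := by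
          have := (ZMod.val_eq_zero (D.o c - e)).not.2 ho0; omega
        constructor
        · intro hlt; exact Or.inr (by omega)
        · rintro (hc' | hlt)
          · exact absurd hc' hc
          · omega
    rw [GaussCode.d, GaussCode.d, hset, Finset.card_insert_of_notMem]
    simp only [Finset.mem_filter, Finset.mem_univ, true_and, not_lt]
    have eu : (D.u c₀ - (e + 1) : ZMod (2 * n)) = -1 := by rw [← he]; ring
    have eo : (D.o c₀ - (e + 1) : ZMod (2 * n)) = (D.o c₀ - e) - 1 := by ring
    have ho0 : (D.o c₀ - e : ZMod (2 * n)) ≠ 0 := by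
      intro hx
      exact hou c₀ c₀ (by rw [← he]; exact sub_eq_zero.1 hx)
    rw [eu, eo, aux_sub_one_val _ ho0]
    have hneg1 : ((-1 : ZMod (2 * n))).val = 2 * n - 1 := by
      have := aux_neg_one_sub_val (0 : ZMod (2 * n))
      simpa using this
    rw [hneg1]
    have := ZMod.val_lt (D.o c₀ - e)
    omega
  -- assemble
  set c₀ : Fin n := ⟨0, hn⟩
  have h1 : D.wdeg ≤ D.d (D.u c₀ + 1) := Nat.sInf_le ⟨D.u c₀ + 1, rfl⟩
  have h2 : Dm.wdeg ≤ Dm.d (1 - D.u c₀) := Nat.sInf_le ⟨1 - D.u c₀, rfl⟩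
  have h3 := key (D.u c₀)
  have h4 := step c₀
  omega
end

section
/- Let D be an oriented alternating knot diagram whose crossing number n is a nonzero even number, modeled by a Gauss code g. Then X_D(t) ≠ X_{−D}(t), where −D is D with the orientation reversed. -/
open Polynomial Finset

namespace GaussCode

variable {n : ℕ}

lemma o_ne_u (D : GaussCode n) (c : Fin n) : D.o c ≠ D.u c := by
  intro h
  have h1 := D.g_o c
  rw [h, D.g_u c] at h1
  simp at h1

private lemma val_sub_one {m : ℕ} [NeZero m] (hm : 1 < m) (x : ZMod m) (hx : x ≠ 0) :
    (x - 1).val = x.val - 1 := by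
  haveI : Fact (1 < m) := ⟨hm⟩
  have h1 : (1 : ZMod m).val = 1 := ZMod.val_one m
  have hle : (1 : ZMod m).val ≤ x.val := by
    rw [h1]
    exact Nat.one_le_iff_ne_zero.mpr (fun h => hx ((ZMod.val_eq_zero x).mp h))
  rw [ZMod.val_sub hle, h1]

private lemma val_pos {m : ℕ} [NeZero m] (x : ZMod m) (hx : x ≠ 0) : 1 ≤ x.val :=
  Nat.one_le_iff_ne_zero.mpr (fun h => hx ((ZMod.val_eq_zero x).mp h))

private lemma val_ne {m : ℕ} [NeZero m] {x y : ZMod m} (hxy : x ≠ y) : x.val ≠ y.val :=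
  fun h => hxy (ZMod.val_injective m h)

private lemma val_neg_one {m : ℕ} [NeZero m] (hm : 1 < m) :
    (-1 : ZMod m).val = m - 1 := by
  haveI : Fact (1 < m) := ⟨hm⟩
  rw [ZMod.neg_val, if_neg one_ne_zero, ZMod.val_one]

/-- If the position `e` is an over-passage, the warping degree increases by one
when the base point passes it. -/
lemma d_succ_of_over (D : GaussCode n) (hn : n ≠ 0) (e : ZMod (2 * n))
    (he : (D.g e).2 = true) : D.d (e + 1) = D.d e + 1 := by
  haveI : NeZero (2 * n) := ⟨by omega⟩
  have hm : 1 < 2 * n := by omega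
  set c₀ : Fin n := (D.g e).1 with hc₀
  have hge : D.g e = (c₀, true) := by rw [hc₀, ← he]
  have hoe : e = D.o c₀ := (D.over_iff c₀ e).mp hge
  have hu_ne : ∀ c : Fin n, D.u c ≠ e := by
    intro c hc
    have := D.g_u c
    rw [hc, hge] at this
    simp at this
  have ho_ne : ∀ c : Fin n, c ≠ c₀ → D.o c ≠ e := by
    intro c hc hce
    have := D.g_o c
    rw [hce, hge] at this
    simp only [Prod.mk.injEq, and_true] at this
    exact hc this.symm
  have key : (Finset.univ.filter fun c : Fin n =>
        (D.u c - (e + 1)).val < (D.o c - (e + 1)).val)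
      = insert c₀ (Finset.univ.filter fun c : Fin n =>
        (D.u c - e).val < (D.o c - e).val) := by
    ext c
    simp only [mem_insert, mem_filter, mem_univ, true_and]
    by_cases hc : c = c₀
    · subst hc
      have hlhs : (D.u c₀ - (e + 1)).val < (D.o c₀ - (e + 1)).val := by
        have h1 : D.o c₀ - (e + 1) = -1 := by rw [← hoe]; ring
        have h2 : D.u c₀ - (e + 1) ≠ -1 := by
          intro hcon
          exact D.o_ne_u c₀ (by linear_combination h1 - hcon)
        have h3 : (D.u c₀ - (e + 1)).val ≠ 2 * n - 1 := by
          intro hval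
          apply h2
          apply ZMod.val_injective
          rw [hval, val_neg_one hm]
        have h4 := (D.u c₀ - (e + 1)).val_lt
        rw [h1, val_neg_one hm]
        omega
      constructor
      · intro _; exact Or.inl rfl
      · intro _; exact hlhs
    · have hu0 : D.u c - e ≠ 0 := fun hcon => hu_ne c (sub_eq_zero.mp hcon)
      have ho0 : D.o c - e ≠ 0 := fun hcon => ho_ne c hc (sub_eq_zero.mp hcon)
      have e1 : D.u c - (e + 1) = (D.u c - e) - 1 := by ring
      have e2 : D.o c - (e + 1) = (D.o c - e) - 1 := by ring
      rw [e1, e2, val_sub_one hm _ hu0, val_sub_one hm _ ho0]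
      have hu1 := val_pos _ hu0
      have ho1 := val_pos _ ho0
      constructor
      · intro h'; omega
      · intro h'
        rcases h' with h' | h'
        · exact absurd h' hc
        · omega
  have hnot : c₀ ∉ (Finset.univ.filter fun c : Fin n =>
      (D.u c - e).val < (D.o c - e).val) := by
    simp only [mem_filter, mem_univ, true_and, not_lt]
    rw [← hoe]
    simp
  rw [d, d, key, card_insert_of_notMem hnot]

/-- If the position `e` is an under-passage, the warping degree decreases by one
when the base point passes it. -/
lemma d_succ_of_under (D : GaussCode n) (hn : n ≠ 0) (e : ZMod (2 * n))
    (he : (D.g e).2 = false) : D.d e = D.d (e + 1) + 1 := by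
  haveI : NeZero (2 * n) := ⟨by omega⟩
  have hm : 1 < 2 * n := by omega
  set c₀ : Fin n := (D.g e).1 with hc₀
  have hge : D.g e = (c₀, false) := by rw [hc₀, ← he]
  have hue : e = D.u c₀ := (D.under_iff c₀ e).mp hge
  have ho_ne : ∀ c : Fin n, D.o c ≠ e := by
    intro c hc
    have := D.g_o c
    rw [hc, hge] at this
    simp at this
  have hu_ne : ∀ c : Fin n, c ≠ c₀ → D.u c ≠ e := by
    intro c hc hce
    have := D.g_u c
    rw [hce, hge] at this
    simp only [Prod.mk.injEq, and_true] at this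
    exact hc this.symm
  have key : (Finset.univ.filter fun c : Fin n =>
        (D.u c - e).val < (D.o c - e).val)
      = insert c₀ (Finset.univ.filter fun c : Fin n =>
        (D.u c - (e + 1)).val < (D.o c - (e + 1)).val) := by
    ext c
    simp only [mem_insert, mem_filter, mem_univ, true_and]
    by_cases hc : c = c₀
    · subst hc
      have hlhs : (D.u c₀ - e).val < (D.o c₀ - e).val := by
        rw [← hue]
        simp only [sub_self, ZMod.val_zero]
        exact val_pos _ (fun hcon => ho_ne c₀ (sub_eq_zero.mp hcon))
      constructor
      · intro _; exact Or.inl rfl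
      · intro _; exact hlhs
    · have hu0 : D.u c - e ≠ 0 := fun hcon => hu_ne c hc (sub_eq_zero.mp hcon)
      have ho0 : D.o c - e ≠ 0 := fun hcon => ho_ne c (sub_eq_zero.mp hcon)
      have e1 : D.u c - (e + 1) = (D.u c - e) - 1 := by ring
      have e2 : D.o c - (e + 1) = (D.o c - e) - 1 := by ring
      rw [e1, e2, val_sub_one hm _ hu0, val_sub_one hm _ ho0]
      have hu1 := val_pos _ hu0
      have ho1 := val_pos _ ho0
      constructor
      · intro h'
        right; omega
      · intro h'
        rcases h' with h' | h'
        · exact absurd h' hc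
        · omega
  have hnot : c₀ ∉ (Finset.univ.filter fun c : Fin n =>
      (D.u c - (e + 1)).val < (D.o c - (e + 1)).val) := by
    simp only [mem_filter, mem_univ, true_and, not_lt]
    have h1 : D.u c₀ - (e + 1) = -1 := by rw [← hue]; ring
    rw [h1, val_neg_one hm]
    have := (D.o c₀ - (e + 1)).val_lt
    omega
  rw [d, d, key, card_insert_of_notMem hnot]

lemma d_add_two (D : GaussCode n) (hn : n ≠ 0) (halt : D.Alternating)
    (e : ZMod (2 * n)) : D.d (e + 2) = D.d e := by
  have h22 : e + 2 = (e + 1) + 1 := by ring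
  cases hb : (D.g e).2
  · have h1 := D.d_succ_of_under hn e hb
    have hb2 : (D.g (e + 1)).2 = true := by
      have := halt e
      rw [hb] at this
      exact (Bool.not_eq_false _).mp (Ne.symm this)
    have h2 := D.d_succ_of_over hn (e + 1) hb2
    rw [h22]
    omega
  · have h1 := D.d_succ_of_over hn e hb
    have hb2 : (D.g (e + 1)).2 = false := by
      have := halt e
      rw [hb] at this
      exact (Bool.not_eq_true _).mp (Ne.symm this)
    have h2 := D.d_succ_of_under hn (e + 1) hb2
    rw [h22]
    omega

lemma d_add_two_mul (D : GaussCode n) (hn : n ≠ 0) (halt : D.Alternating)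
    (e : ZMod (2 * n)) (k : ℕ) : D.d (e + ((2 * k : ℕ) : ZMod (2 * n))) = D.d e := by
  induction k with
  | zero => simp
  | succ k ih =>
    have : e + ((2 * (k + 1) : ℕ) : ZMod (2 * n)) = (e + ((2 * k : ℕ) : ZMod (2 * n))) + 2 := by
      push_cast; ring
    rw [this, D.d_add_two hn halt, ih]

lemma bit_shift (D : GaussCode n) (halt : D.Alternating) (e : ZMod (2 * n)) (m : ℕ) :
    ((D.g (e + (m : ZMod (2 * n)))).2 = (D.g e).2) ↔ Even m := by
  induction m with
  | zero => simp
  | succ m ih =>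
    have hstep : (D.g (e + ((m + 1 : ℕ) : ZMod (2 * n)))).2 = !(D.g (e + (m : ZMod (2 * n)))).2 := by
      have hne := halt (e + (m : ZMod (2 * n)))
      have hcast : e + ((m + 1 : ℕ) : ZMod (2 * n)) = (e + (m : ZMod (2 * n))) + 1 := by
        push_cast; ring
      rw [hcast]
      cases h1 : (D.g (e + (m : ZMod (2 * n)))).2 <;>
        cases h2 : (D.g ((e + (m : ZMod (2 * n))) + 1)).2 <;> simp_all
    rw [hstep, Nat.even_add_one, ← ih]
    cases (D.g (e + (m : ZMod (2 * n)))).2 <;> cases (D.g e).2 <;> simp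

/-- In an alternating diagram, the warping degree at all over-passages is the same. -/
lemma d_o_const (D : GaussCode n) (hn : n ≠ 0) (halt : D.Alternating)
    (c c' : Fin n) : D.d (D.o c) = D.d (D.o c') := by
  haveI : NeZero (2 * n) := ⟨by omega⟩
  set m : ℕ := (D.o c' - D.o c).val with hm
  have hshift : D.o c' = D.o c + (m : ZMod (2 * n)) := by
    rw [hm, ZMod.natCast_rightInverse (D.o c' - D.o c)]
    ring
  have hbits : (D.g (D.o c + (m : ZMod (2 * n)))).2 = (D.g (D.o c)).2 := by
    rw [← hshift, D.g_o, D.g_o]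
  have heven : Even m := (D.bit_shift halt (D.o c) m).mp hbits
  obtain ⟨k, hk⟩ := heven
  have hmk : m = 2 * k := by omega
  rw [hshift, hmk, D.d_add_two_mul hn halt]

/-- The key counting identity between a diagram and its reverse. -/
lemma d_add_d_rev (D Dm : GaussCode n) (hn : n ≠ 0)
    (h : ∀ e : ZMod (2 * n), Dm.g e = D.g (-e)) (c₀ : Fin n) :
    D.d (D.o c₀) + Dm.d (Dm.o c₀) + 1 = n := by
  haveI : NeZero (2 * n) := ⟨by omega⟩
  set e : ZMod (2 * n) := D.o c₀ with he
  have ho : ∀ c : Fin n, Dm.o c = -(D.o c) := by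
    intro c
    exact ((Dm.over_iff c (-(D.o c))).mp (by rw [h, neg_neg, D.g_o])).symm
  have hu : ∀ c : Fin n, Dm.u c = -(D.u c) := by
    intro c
    exact ((Dm.under_iff c (-(D.u c))).mp (by rw [h, neg_neg, D.g_u])).symm
  have hrev : Dm.d (Dm.o c₀) = (Finset.univ.filter fun c : Fin n =>
      (e - D.u c).val < (e - D.o c).val).card := by
    rw [d]
    congr 1
    apply filter_congr
    intro c _
    rw [ho, hu, ho]
    have e1 : -(D.u c) - -(D.o c₀) = e - D.u c := by rw [he]; ring
    have e2 : -(D.o c) - -(D.o c₀) = e - D.o c := by rw [he]; ring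
    rw [e1, e2]
  have hu_ne : ∀ c : Fin n, D.u c ≠ e := by
    intro c hc
    have h1 := D.g_u c
    rw [hc, he, D.g_o] at h1
    simp at h1
  have ho_ne : ∀ c : Fin n, c ≠ c₀ → D.o c ≠ e := by
    intro c hc hce
    have h1 := D.g_o c
    rw [hce, he, D.g_o] at h1
    simp only [Prod.mk.injEq, and_true] at h1
    exact hc h1.symm
  set S : Finset (Fin n) := Finset.univ.filter fun c : Fin n =>
      (D.u c - e).val < (D.o c - e).val with hS
  set T : Finset (Fin n) := Finset.univ.filter fun c : Fin n =>
      (e - D.u c).val < (e - D.o c).val with hT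
  have hc₀S : c₀ ∉ S := by
    rw [hS]
    simp only [mem_filter, mem_univ, true_and, not_lt]
    rw [← he]
    simp
  have hTcompl : T = Finset.univ \ insert c₀ S := by
    ext c
    rw [hS, hT]
    simp only [mem_filter, mem_univ, true_and, mem_sdiff, mem_insert, not_or, not_lt]
    by_cases hc : c = c₀
    · subst hc
      constructor
      · intro hcon
        exfalso
        rw [← he] at hcon
        simp at hcon
      · intro ⟨hcon, _⟩; exact absurd rfl hcon
    · have hu0 : D.u c - e ≠ 0 := fun hcon => hu_ne c (sub_eq_zero.mp hcon)
      have ho0 : D.o c - e ≠ 0 := fun hcon => ho_ne c hc (sub_eq_zero.mp hcon)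
      have huo : D.u c - e ≠ D.o c - e := by
        intro hcon
        have huo' : D.u c = D.o c := by linear_combination hcon
        exact D.o_ne_u c huo'.symm
      have e1 : e - D.u c = -(D.u c - e) := by ring
      have e2 : e - D.o c = -(D.o c - e) := by ring
      rw [e1, e2, ZMod.neg_val, ZMod.neg_val, if_neg hu0, if_neg ho0]
      have h1 := val_pos _ hu0
      have h2 := val_pos _ ho0
      have h3 := (D.u c - e).val_lt
      have h4 := (D.o c - e).val_lt
      have h5 := val_ne huo
      constructor
      · intro h'; exact ⟨hc, by omega⟩
      · intro ⟨_, h'⟩; omega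
  have hins : (insert c₀ S).card = S.card + 1 := card_insert_of_notMem hc₀S
  have hsub : (insert c₀ S).card ≤ n := by
    have := card_le_card (subset_univ (insert c₀ S))
    simpa using this
  have hTcard : T.card = n - (S.card + 1) := by
    rw [hTcompl, card_sdiff_of_subset (subset_univ _), hins]
    simp
  have hd : D.d e = S.card := by rw [hS]; rfl
  rw [hd, hrev, hTcard]
  omega

end GaussCode

/-- An alternating knot diagram with a nonzero even number of crossings has
`X_D(t) ≠ X_{−D}(t)`. -/
theorem Xpoly_ne_Xpoly_reverse_of_alternating_even
    (n : ℕ) (hn : n ≠ 0) (heven : Even n) (D Dm : GaussCode n)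
    (halt : D.Alternating)
    (h : ∀ e : ZMod (2 * n), Dm.g e = D.g (-e)) :
    D.Xpoly ≠ Dm.Xpoly := by
  haveI : NeZero (2 * n) := ⟨by omega⟩
  obtain ⟨c₀⟩ : Nonempty (Fin n) := ⟨⟨0, Nat.pos_of_ne_zero hn⟩⟩
  have haltm : Dm.Alternating := by
    intro e
    rw [h e, h (e + 1)]
    have h1 := (halt (-(e + 1))).symm
    rwa [show -(e + 1) + 1 = -e by ring] at h1
  set a := D.d (D.o c₀) with ha
  set a' := Dm.d (Dm.o c₀) with ha'
  have hsum : a + a' + 1 = n := D.d_add_d_rev Dm hn h c₀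
  have haa' : a ≠ a' := by
    rcases heven with ⟨k, hk⟩
    omega
  have hda : ∀ c : Fin n, D.d (D.o c) = a := fun c => D.d_o_const hn halt c c₀
  have hda' : ∀ c : Fin n, Dm.d (Dm.o c) = a' := fun c => Dm.d_o_const hn haltm c c₀
  intro hX
  have h1 : D.Xpoly.coeff a = (n : ℤ) := by
    rw [GaussCode.Xpoly, Polynomial.finset_sum_coeff]
    simp [hda, Polynomial.coeff_X_pow]
  have h2 : Dm.Xpoly.coeff a = 0 := by
    rw [GaussCode.Xpoly, Polynomial.finset_sum_coeff]
    simp [hda', Polynomial.coeff_X_pow, haa']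
  rw [hX, h2] at h1
  exact hn (by exact_mod_cast h1.symm)
end
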